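/- Let κ be an infinite cardinal, Y a set of reals satisfying S₁(Γ_Borel, Γ_Borel), X ⊆ [ω]^ω a κ-fin-unbounded set, k a natural number, H ⊆ X finite, and U a countable open γ-cover of (H ∪ Fin)_M^k × Y (where subscript M denotes the Michael topology on subsets of P(ω), in which points of [ω]^ω are isolated and points of Fin have their usual neighborhoods). Then there is S ⊆ X with |S| < κ such that U is an ω-cover of (H ∪ Fin ∪ (X \ S))_M^k × Y. -/

import Mathlib

open Set Filter Topology

/-- The Cantor space `P(ω) ≅ 2^ω`. -/
abbrev Cant : Type := ℕ → Bool

/-- The subset of `ω` coded by a point of the Cantor space. -/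
def memSet (x : Cant) : Set ℕ := {n : ℕ | x n = true}

/-- `x` codes an infinite subset of `ω`. -/
def InfinC (x : Cant) : Prop := (memSet x).Infinite

/-- The points of `P(ω)` coding finite sets. -/
def FinC : Set Cant := {x : Cant | (memSet x).Finite}

/-- The Michael topology on `P(ω)`: points of `[ω]^ω` are isolated, points of `Fin`
keep their usual neighborhoods (generated by standard opens and singletons of
infinite sets). -/
def michael : TopologicalSpace Cant :=
  TopologicalSpace.generateFrom
    ({U : Set Cant | IsOpen U} ∪ {s : Set Cant | ∃ x, InfinC x ∧ s = {x}})

/-- The product topology on `P(ω)^k × P(ω)`, with the Michael topology on each of the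
first `k` coordinates and the standard topology on the last one. -/
def michaelProd (k : ℕ) : TopologicalSpace ((Fin k → Cant) × Cant) :=
  @instTopologicalSpaceProd _ _
    (@Pi.topologicalSpace (Fin k) (fun _ => Cant) (fun _ => michael)) inferInstance

/-- The increasing enumeration of a set of naturals. -/
noncomputable def enum (s : Set ℕ) : ℕ → ℕ := Nat.nth (· ∈ s)

/-- `X ⊆ [ω]^ω` is a `κ`-fin-unbounded set: `|X| ≥ κ` and for each `d ∈ [ω]^ω` there is
`S ⊆ X` with `|S| < κ` such that the union of any finite subset of `X \ S` omits
infinitely many intervals of `d`. -/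
def KFinUnb (κ : Cardinal) (X : Set Cant) : Prop :=
  κ ≤ Cardinal.mk X ∧ ∀ d : Set ℕ, d.Infinite → ∃ S ⊆ X, Cardinal.mk S < κ ∧
    ∀ F : Finset Cant, ↑F ⊆ X \ S →
      {n : ℕ | (⋃ x ∈ F, memSet x) ∩ Set.Ico (enum d n) (enum d (n + 1)) = ∅}.Infinite

/-- A countable Borel `γ`-cover of `Y`: an infinite family of Borel sets such that every
point of `Y` belongs to all but finitely many members. -/
def BorelGammaCover (Y : Set Cant) (U : ℕ → Set Cant) : Prop :=
  (∀ n, MeasurableSet (U n)) ∧ (Set.range U).Infinite ∧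
  ∀ y ∈ Y, ∀ᶠ n in atTop, y ∈ U n

/-- `Y` satisfies `S₁(Γ_Borel, Γ_Borel)`. -/
def S1GBorGBor (Y : Set Cant) : Prop :=
  ∀ U : ℕ → ℕ → Set Cant, (∀ n, BorelGammaCover Y (U n)) →
    ∃ f : ℕ → ℕ, BorelGammaCover Y (fun n => U n (f n))

/-- A countable open `γ`-cover (by sets open in the Michael product topology) of
`Z^k × Y ⊆ P(ω)^k × P(ω)`. -/
def MGammaCover (k : ℕ) (Z Y : Set Cant) (U : ℕ → Set ((Fin k → Cant) × Cant)) : Prop :=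
  (∀ n, IsOpen[michaelProd k] (U n)) ∧ (Set.range U).Infinite ∧
  ∀ p : (Fin k → Cant) × Cant, (∀ i, p.1 i ∈ Z) → p.2 ∈ Y → ∀ᶠ n in atTop, p ∈ U n

/-- An `ω`-cover (by sets open in the Michael product topology) of `Z^k × Y`: every
finite subset of `Z^k × Y` is contained in some member. -/
def MOmegaCover (k : ℕ) (Z Y : Set Cant) (U : ℕ → Set ((Fin k → Cant) × Cant)) : Prop :=
  (∀ n, IsOpen[michaelProd k] (U n)) ∧
  ∀ P : Finset ((Fin k → Cant) × Cant), (∀ p ∈ P, (∀ i, p.1 i ∈ Z) ∧ p.2 ∈ Y) →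
    ∃ n, ↑P ⊆ U n

namespace S12

def Agree (r : ℕ) (y y' : Cant) : Prop := ∀ j < r, y' j = y j

lemma Agree.refl (r : ℕ) (y : Cant) : Agree r y y := fun _ _ => rfl

lemma Agree.mono {r r' : ℕ} (h : r ≤ r') {y y' : Cant} (ha : Agree r' y y') : Agree r y y' :=
  fun j hj => ha j (lt_of_lt_of_le hj h)

lemma Agree.trans {r : ℕ} {a b c : Cant} (h1 : Agree r a b) (h2 : Agree r b c) : Agree r a c :=
  fun j hj => (h2 j hj).trans (h1 j hj)

def FinBelow (m : ℕ) : Set Cant := {x | ∀ j, x j = true → j < m}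

def trunc (r : ℕ) (x : Cant) : Cant := fun j => if j < r then x j else false

lemma trunc_mem_finBelow (r : ℕ) (x : Cant) : trunc r x ∈ FinBelow r := by
  intro j hj
  by_contra h
  simp [trunc, if_neg h] at hj

lemma finBelow_subset_finC (m : ℕ) : FinBelow m ⊆ FinC := by
  intro x hx
  exact (Set.finite_Iio m).subset (fun j hj => hx j hj)

lemma finBelow_finite (m : ℕ) : (FinBelow m).Finite := by
  have : FinBelow m ⊆ Set.range
      (fun g : Fin m → Bool => (fun j => if h : j < m then g ⟨j, h⟩ else false : Cant)) := by
    intro x hx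
    refine ⟨fun j => x j, funext fun j => ?_⟩
    by_cases h : j < m
    · simp [h]
    · simp only [dif_neg h]
      cases hxj : x j
      · rfl
      · exact absurd (hx j hxj) h
  exact (Set.finite_range _).subset this

lemma cantor_cyl {O : Set Cant} (hO : IsOpen O) {x : Cant} (hx : x ∈ O) :
    ∃ r, ∀ z, Agree r x z → z ∈ O := by
  rcases isOpen_pi_iff.mp hO x hx with ⟨I, u, hu, hsub⟩
  refine ⟨(I.sup id) + 1, fun z hz => hsub ?_⟩
  intro j hj
  have hzj := hz j (Nat.lt_succ_of_le (Finset.le_sup (f := id) hj))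
  rw [hzj]
  exact (hu j hj).2

lemma michael_fin_cyl {O : Set Cant} (hO : IsOpen[michael] O) {x : Cant}
    (hfin : (memSet x).Finite) (hx : x ∈ O) :
    ∃ r, ∀ z, Agree r x z → z ∈ O := by
  have hO' : TopologicalSpace.GenerateOpen
      ({U : Set Cant | IsOpen U} ∪ {s : Set Cant | ∃ x, InfinC x ∧ s = {x}}) O := hO
  clear hO
  revert hx
  induction hO' with
  | basic s hs =>
      intro hx
      rcases hs with hs | ⟨x', hx', rfl⟩
      · exact cantor_cyl hs hx
      · rw [Set.mem_singleton_iff] at hx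
        subst hx
        exact absurd hfin hx'
  | univ => exact fun _ => ⟨0, fun z _ => trivial⟩
  | inter s t _ _ ihs iht =>
      intro hx
      obtain ⟨r1, h1⟩ := ihs hx.1
      obtain ⟨r2, h2⟩ := iht hx.2
      exact ⟨max r1 r2, fun z hz =>
        ⟨h1 z (hz.mono (le_max_left _ _)), h2 z (hz.mono (le_max_right _ _))⟩⟩
  | sUnion S hS ih =>
      intro hx
      obtain ⟨s, hsS, hxs⟩ := hx
      obtain ⟨r, hr⟩ := ih s hsS hxs
      exact ⟨r, fun z hz => ⟨s, hsS, hr z hz⟩⟩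

def BoxMem (k r : ℕ) (t t' : Fin k → Cant) : Prop :=
  ∀ i, ((memSet (t i)).Finite ∧ Agree r (t i) (t' i)) ∨ ((memSet (t i)).Infinite ∧ t' i = t i)

lemma BoxMem.mono {k : ℕ} {r r' : ℕ} (h : r ≤ r') {t t' : Fin k → Cant}
    (hb : BoxMem k r' t t') : BoxMem k r t t' := by
  intro i
  rcases hb i with ⟨h1, h2⟩ | h1
  · exact Or.inl ⟨h1, h2.mono h⟩
  · exact Or.inr h1

lemma prod_box {k : ℕ} {W : Set ((Fin k → Cant) × Cant)} (hW : IsOpen[michaelProd k] W)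
    {t : Fin k → Cant} {y : Cant} (h : (t, y) ∈ W) :
    ∃ r, ∀ t' y', BoxMem k r t t' → Agree r y y' → (t', y') ∈ W := by
  obtain ⟨u, v, hu, hv, htu, hyv, huv⟩ :=
    (@isOpen_prod_iff _ _ (@Pi.topologicalSpace (Fin k) (fun _ => Cant) (fun _ => michael))
      inferInstance W).mp hW t y h
  obtain ⟨I, us, hus, hsub⟩ :=
    (@isOpen_pi_iff (Fin k) (fun _ => Cant) (fun _ => michael) u).mp hu t htu
  have key : ∀ i : Fin k, ∃ ri, ∀ z, (memSet (t i)).Finite → i ∈ I → Agree ri (t i) z → z ∈ us i := by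
    intro i
    by_cases hfin : (memSet (t i)).Finite
    · by_cases hiI : i ∈ I
      · obtain ⟨ri, hri⟩ := michael_fin_cyl (hus i hiI).1 hfin (hus i hiI).2
        exact ⟨ri, fun z _ _ hz => hri z hz⟩
      · exact ⟨0, fun z _ h' => absurd h' hiI⟩
    · exact ⟨0, fun z h' => absurd h' hfin⟩
  choose R hR using key
  obtain ⟨ry, hry⟩ := cantor_cyl hv hyv
  refine ⟨max (Finset.univ.sup R) ry, fun t' y' hbox hagree =>
    huv ⟨hsub ?_, hry y' (hagree.mono (le_max_right _ _))⟩⟩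
  intro i hiI
  show t' i ∈ us i
  rcases hbox i with ⟨hfin, hag⟩ | ⟨_, heq⟩
  · exact hR i (t' i) hfin (Finset.mem_coe.mp hiI)
      (hag.mono ((Finset.le_sup (Finset.mem_univ i)).trans (le_max_left _ _)))
  · rw [heq]
    exact (hus i (Finset.mem_coe.mp hiI)).2

def Vset (k : ℕ) (W : Set ((Fin k → Cant) × Cant)) (H : Finset Cant) (m r : ℕ) : Set Cant :=
  {y | ∀ t t' : Fin k → Cant, ∀ y' : Cant,
    (∀ i, t i ∈ ↑H ∪ FinBelow m) → BoxMem k r t t' → Agree r y y' → (t', y') ∈ W}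

lemma Vset_mono {k : ℕ} {W : Set ((Fin k → Cant) × Cant)} {H : Finset Cant} {m : ℕ}
    {r r' : ℕ} (h : r ≤ r') : Vset k W H m r ⊆ Vset k W H m r' := by
  intro y hy t t' y' hc hbox hag
  exact hy t t' y' hc (hbox.mono h) (hag.mono h)

lemma Vset_open {k : ℕ} {W : Set ((Fin k → Cant) × Cant)} {H : Finset Cant} {m r : ℕ} :
    IsOpen (Vset k W H m r) := by
  rw [isOpen_iff_forall_mem_open]
  intro y hy
  refine ⟨{y' | Agree r y y'}, ?_, ?_, Agree.refl r y⟩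
  · intro y2 hy2 t t' y' hc hbox hag
    exact hy t t' y' hc hbox (Agree.trans hy2 hag)
  · have : {y' : Cant | Agree r y y'} = ⋂ j ∈ Finset.range r, (fun y' : Cant => y' j) ⁻¹' {y j} := by
      ext z
      simp [Agree]
    rw [this]
    exact isOpen_biInter_finset fun j _ =>
      (isOpen_discrete _).preimage (continuous_apply j)

lemma tuples_finite (k m : ℕ) (H : Finset Cant) :
    {t : Fin k → Cant | ∀ i, t i ∈ ↑H ∪ FinBelow m}.Finite := by
  have : {t : Fin k → Cant | ∀ i, t i ∈ ↑H ∪ FinBelow m}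
      = Set.pi Set.univ (fun _ => ↑H ∪ FinBelow m) := by
    ext t; simp [Set.mem_pi]
  rw [this]
  exact Set.Finite.pi fun _ => (H.finite_toSet.union (finBelow_finite m))

/-- canonical distinct points -/
def pt (n : ℕ) : Cant := fun j => decide (j = n)

lemma pt_injective : Function.Injective pt := by
  intro a b h
  have := congrFun h a
  simp [pt] at this
  exact this

/-- pigeonhole: a function ℕ → α with finite range has an infinite fiber -/
lemma exists_infinite_fiber {α : Type*} (f : ℕ → α) (h : (Set.range f).Finite) :
    ∃ a, {n | f n = a}.Infinite := by
  by_contra hall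
  push_neg at hall
  have huniv : (Set.univ : Set ℕ) = ⋃ a ∈ Set.range f, {n | f n = a} := by
    ext n
    simp only [Set.mem_univ, true_iff, Set.mem_iUnion]
    exact ⟨f n, ⟨n, rfl⟩, rfl⟩
  have : (Set.univ : Set ℕ).Finite := by
    rw [huniv]
    exact h.biUnion (fun a _ => hall a)
  exact Set.infinite_univ this

/-- if a family with finite range eventually covers each y of Y, some single member contains Y -/
lemma exists_const_cover {Y : Set Cant} (C : ℕ → Set Cant)
    (hfin : ¬ (Set.range C).Infinite) (hcov : ∀ y ∈ Y, ∀ᶠ n in atTop, y ∈ C n) :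
    ∃ n0, ∀ y ∈ Y, y ∈ C n0 := by
  rw [Set.not_infinite] at hfin
  obtain ⟨W, hW⟩ := exists_infinite_fiber C hfin
  obtain ⟨n0, hn0⟩ := hW.nonempty
  refine ⟨n0, fun y hy => ?_⟩
  obtain ⟨N, hN⟩ := eventually_atTop.mp (hcov y hy)
  obtain ⟨n, hnW, hn⟩ := hW.exists_gt N
  have hyn : y ∈ C n := hN n (le_of_lt hn)
  rw [Set.mem_setOf_eq] at hnW hn0
  rw [hnW] at hyn
  rw [hn0]
  exact hyn

/-- patching a family that eventually covers every point with distinct removed points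
gives infinite range -/
lemma patch_range_infinite (C : ℕ → Set Cant)
    (hcov : ∀ z : Cant, ∀ᶠ n in atTop, z ∈ C n) :
    (Set.range (fun n => C n \ {pt n})).Infinite := by
  by_contra hfin
  rw [Set.not_infinite] at hfin
  obtain ⟨W, hW⟩ := exists_infinite_fiber _ hfin
  obtain ⟨n1, hn1⟩ := hW.nonempty
  rw [Set.mem_setOf_eq] at hn1
  have hpt : pt n1 ∉ W := by
    rw [← hn1]
    exact fun h => h.2 rfl
  obtain ⟨N, hN⟩ := eventually_atTop.mp (hcov (pt n1))
  obtain ⟨n2, hn2W, hn2⟩ := hW.exists_gt (max N n1)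
  rw [Set.mem_setOf_eq] at hn2W
  refine hpt ?_
  rw [← hn2W]
  refine ⟨hN n2 (le_of_lt (lt_of_le_of_lt (le_max_left _ _) hn2)), ?_⟩
  intro hmem
  rw [Set.mem_singleton_iff] at hmem
  exact absurd (pt_injective hmem) (by omega)

/-- every point is eventually distinct from pt n -/
lemma eventually_ne_pt (z : Cant) : ∀ᶠ n in atTop, z ∉ ({pt n} : Set Cant) := by
  rw [← Nat.cofinite_eq_atTop]
  apply Set.Finite.eventually_cofinite_notMem
  have hsub : {n | z ∈ ({pt n} : Set Cant)} ⊆ {n | z = pt n} := fun n h => h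
  refine Set.Finite.subset ?_ hsub
  rcases Set.eq_empty_or_nonempty {n | z = pt n} with h | ⟨n0, hn0⟩
  · rw [h]; exact Set.finite_empty
  · refine Set.Finite.subset (Set.finite_singleton n0) ?_
    intro n hn
    rw [Set.mem_setOf_eq] at hn hn0
    exact Set.mem_singleton_iff.mpr (pt_injective (hn0.symm.trans hn)).symm

end S12


/-- Lemma: for an infinite cardinal `κ`, a `κ`-fin-unbounded `X ⊆ [ω]^ω`, a set `Y`
satisfying `S₁(Γ_Borel, Γ_Borel)`, a finite `H ⊆ X` and a countable open `γ`-cover `U`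
of `(H ∪ Fin)_M^k × Y`, there is `S ⊆ X` with `|S| < κ` such that `U` is an `ω`-cover
of `(H ∪ Fin ∪ (X \ S))_M^k × Y`. -/
theorem stmt12 (κ : Cardinal) (hκ : Cardinal.aleph0 ≤ κ)
    (Y : Set Cant) (hY : S1GBorGBor Y)
    (X : Set Cant) (hXinf : ∀ x ∈ X, InfinC x) (hX : KFinUnb κ X)
    (k : ℕ) (H : Finset Cant) (hH : ↑H ⊆ X)
    (U : ℕ → Set ((Fin k → Cant) × Cant)) (hU : MGammaCover k (↑H ∪ FinC) Y U) :
    ∃ S ⊆ X, Cardinal.mk S < κ ∧ MOmegaCover k (↑H ∪ FinC ∪ (X \ S)) Y U := by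
  classical
  obtain ⟨hUopen, hUrange, hUgamma⟩ := hU
  -- step 1 : availability of resolutions
  have hgamma : ∀ m : ℕ, ∀ y ∈ Y, ∀ᶠ n in atTop, ∃ r, y ∈ S12.Vset k (U n) H m r := by
    intro m y hy
    have hT := S12.tuples_finite k m H
    have hev : ∀ᶠ n in atTop,
        ∀ t ∈ {t : Fin k → Cant | ∀ i, t i ∈ ↑H ∪ S12.FinBelow m}, (t, y) ∈ U n := by
      rw [eventually_all_finite hT]
      intro t ht
      exact hUgamma (t, y)
        (fun i => (Set.union_subset_union_right _ (S12.finBelow_subset_finC m)) (ht i)) hy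
    refine hev.mono ?_
    intro n hn
    have key : ∀ t : Fin k → Cant, ∃ rt, (∀ i, t i ∈ ↑H ∪ S12.FinBelow m) →
        ∀ t' y', S12.BoxMem k rt t t' → S12.Agree rt y y' → (t', y') ∈ U n := by
      intro t
      by_cases ht : ∀ i, t i ∈ ↑H ∪ S12.FinBelow m
      · obtain ⟨rt, hrt⟩ := S12.prod_box (hUopen n) (hn t ht)
        exact ⟨rt, fun _ => hrt⟩
      · exact ⟨0, fun h => absurd h ht⟩
    choose R hR using key
    refine ⟨hT.toFinset.sup R, ?_⟩
    intro t t' y' hc hbox hag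
    have htT : t ∈ hT.toFinset := hT.mem_toFinset.mpr hc
    have hle : R t ≤ hT.toFinset.sup R := Finset.le_sup htT
    exact hR t hc t' y' (hbox.mono hle) (hag.mono hle)
  -- step 2 : the unions D and first selection
  set DS : ℕ → ℕ → Set Cant := fun m n => ⋃ r, S12.Vset k (U n) H m r with hDS
  have hDSopen : ∀ m n, IsOpen (DS m n) := fun m n => isOpen_iUnion (fun r => S12.Vset_open)
  have hDScov : ∀ m, ∀ y ∈ Y, ∀ᶠ n in atTop, y ∈ DS m n := by
    intro m y hy
    exact (hgamma m y hy).mono (fun n hn => Set.mem_iUnion.mpr hn)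
  have hch : ∀ m, ∃ nm, ¬ (Set.range (DS m)).Infinite → ∀ y ∈ Y, y ∈ DS m nm := by
    intro m
    by_cases hm : (Set.range (DS m)).Infinite
    · exact ⟨0, fun h => absurd hm h⟩
    · obtain ⟨n0, hn0⟩ := S12.exists_const_cover (DS m) hm (hDScov m)
      exact ⟨n0, fun _ => hn0⟩
  choose n0 hn0 using hch
  have hK : BorelGammaCover Y (fun n => ({S12.pt n}ᶜ : Set Cant)) := by
    refine ⟨fun n => (measurableSet_singleton _).compl, ?_, ?_⟩
    · apply Set.infinite_range_of_injective
      intro a b hab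
      have hs : ({S12.pt a} : Set Cant) = {S12.pt b} := by
        have h2 := congrArg compl hab
        simpa using h2
      exact S12.pt_injective (Set.singleton_eq_singleton_iff.mp hs)
    · intro y hy
      exact S12.eventually_ne_pt y
  set DC : ℕ → ℕ → Set Cant := fun m =>
    if (Set.range (DS m)).Infinite then DS m else (fun n => ({S12.pt n}ᶜ : Set Cant)) with hDC
  have hDCcover : ∀ m, BorelGammaCover Y (DC m) := by
    intro m
    by_cases hm : (Set.range (DS m)).Infinite
    · simp only [hDC, if_pos hm]
      exact ⟨fun n => (hDSopen m n).measurableSet, hm, hDScov m⟩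
    · simp only [hDC, if_neg hm]
      exact hK
  obtain ⟨g0, hg0⟩ := hY DC hDCcover
  set g : ℕ → ℕ := fun m => if (Set.range (DS m)).Infinite then g0 m else n0 m with hg
  have hstage1 : ∀ y ∈ Y, ∀ᶠ m in atTop, y ∈ DS m (g m) := by
    intro y hy
    refine (hg0.2.2 y hy).mono (fun m hm => ?_)
    by_cases h : (Set.range (DS m)).Infinite
    · simp only [hDC, if_pos h] at hm
      simp only [hg, if_pos h]
      exact hm
    · simp only [hg, if_neg h]
      exact hn0 m h y hy
  -- step 3 : second selection, obtaining the resolutions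
  set CC : ℕ → ℕ → Set Cant := fun m n =>
    (S12.Vset k (U (g m)) H m n ∪ (DS m (g m))ᶜ) \ {S12.pt n} with hCC
  have hCCcov0 : ∀ m, ∀ z : Cant, ∀ᶠ n in atTop,
      z ∈ S12.Vset k (U (g m)) H m n ∪ (DS m (g m))ᶜ := by
    intro m z
    by_cases hz : z ∈ DS m (g m)
    · obtain ⟨r0, hr0⟩ := Set.mem_iUnion.mp hz
      rw [eventually_atTop]
      exact ⟨r0, fun n hn => Or.inl (S12.Vset_mono hn hr0)⟩
    · exact Filter.Eventually.of_forall (fun n => Or.inr hz)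
  have hCCcover : ∀ m, BorelGammaCover Y (CC m) := by
    intro m
    refine ⟨fun n => ((S12.Vset_open.measurableSet.union
      (hDSopen m (g m)).measurableSet.compl)).diff (measurableSet_singleton _), ?_, ?_⟩
    · exact S12.patch_range_infinite _ (hCCcov0 m)
    · intro y hy
      filter_upwards [hCCcov0 m y, S12.eventually_ne_pt y] with n h1 h2
      exact ⟨h1, h2⟩
  obtain ⟨f1, hf1⟩ := hY CC hCCcover
  have hstage2 : ∀ y ∈ Y, ∀ᶠ m in atTop, y ∈ S12.Vset k (U (g m)) H m (f1 m) := by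
    intro y hy
    filter_upwards [hf1.2.2 y hy, hstage1 y hy] with m h1 h2
    simp only [hCC] at h1
    rcases h1.1 with h | h
    · exact h
    · exact absurd h2 h
  -- step 4 : the diagonal sequence d
  set d : ℕ → ℕ := fun j => Nat.rec 0 (fun _ prev => max (prev + 1) (f1 prev)) j with hd_def
  have hdsucc : ∀ j, d (j + 1) = max (d j + 1) (f1 (d j)) := fun j => rfl
  have hdmono : StrictMono d := strictMono_nat_of_lt_succ (fun j => by
    rw [hdsucc]
    exact lt_of_lt_of_le (Nat.lt_succ_self _) (le_max_left _ _))
  have hdinf : (Set.range d).Infinite := Set.infinite_range_of_injective hdmono.injective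
  have hdle : ∀ j, j ≤ d j := fun j => hdmono.le_apply
  have henum : ∀ j, enum (Set.range d) j = d j := by
    have hinf' : {x | (fun n => n ∈ Set.range d) x}.Infinite := hdinf
    have h1 : StrictMono (Nat.nth (· ∈ Set.range d)) := Nat.nth_strictMono hinf'
    have heq : Nat.nth (· ∈ Set.range d) = d := by
      refine (StrictMono.range_inj h1 hdmono).mp ?_
      rw [Nat.range_nth_of_infinite hinf']
      rfl
    intro j
    rw [enum, heq]
  -- step 5 : apply fin-unboundedness
  obtain ⟨S, hSX, hScard, homit⟩ := hX.2 (Set.range d) hdinf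
  refine ⟨S, hSX, hScard, hUopen, ?_⟩
  intro P hP
  -- the finite set of coordinates
  have hcoordfin : (⋃ p ∈ (↑P : Set ((Fin k → Cant) × Cant)), Set.range p.1).Finite :=
    P.finite_toSet.biUnion fun p _ => Set.finite_range p.1
  -- bounds for finite coordinates
  have hbnd : ∀ x : Cant, ∃ b, ((memSet x).Finite → ∀ jj, x jj = true → jj < b) := by
    intro x
    by_cases hfx : (memSet x).Finite
    · obtain ⟨b, hb⟩ := hfx.bddAbove
      exact ⟨b + 1, fun _ jj hjj => Nat.lt_succ_of_le (hb hjj)⟩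
    · exact ⟨0, fun h => absurd h hfx⟩
  choose B hB using hbnd
  set m0 := hcoordfin.toFinset.sup B with hm0
  -- the elements that need truncating
  set Fs : Set Cant :=
    {x | x ∈ (⋃ p ∈ (↑P : Set ((Fin k → Cant) × Cant)), Set.range p.1)
      ∧ x ∉ (↑H ∪ FinC : Set Cant)} with hFs
  have hFsfin : Fs.Finite := hcoordfin.subset (fun x hx => hx.1)
  have hFsub : ↑hFsfin.toFinset ⊆ X \ S := by
    intro x hx
    rw [Set.Finite.coe_toFinset] at hx
    obtain ⟨hx1, hx2⟩ := hx
    obtain ⟨p, hpP, i, rfl⟩ : ∃ p ∈ (↑P : Set ((Fin k → Cant) × Cant)), ∃ i, p.1 i = x := by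
      simpa using hx1
    have := (hP p hpP).1 i
    simp only [Set.mem_union] at this hx2
    rcases this with (h | h) | h
    · exact absurd (Or.inl h) hx2
    · exact absurd (Or.inr h) hx2
    · exact h
  have hOmitset := homit hFsfin.toFinset hFsub
  -- the threshold on m
  have hPy : ∀ᶠ m in atTop, ∀ p ∈ P, p.2 ∈ S12.Vset k (U (g m)) H m (f1 m) :=
    P.eventually_all.mpr (fun p hp => hstage2 p.2 (hP p hp).2)
  obtain ⟨M, hM⟩ := eventually_atTop.mp hPy
  obtain ⟨j, hjOmit, hjgt⟩ := hOmitset.exists_gt (max M m0)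
  have hjOmit' : (⋃ x ∈ hFsfin.toFinset, memSet x) ∩ Set.Ico (d j) (d (j + 1)) = ∅ := by
    have h := hjOmit
    rw [Set.mem_setOf_eq, henum j, henum (j + 1)] at h
    exact h
  have hdjM : M ≤ d j := le_trans (le_trans (le_max_left _ _) (le_of_lt hjgt)) (hdle j)
  have hdjm0 : m0 ≤ d j := le_trans (le_trans (le_max_right _ _) (le_of_lt hjgt)) (hdle j)
  refine ⟨g (d j), ?_⟩
  intro p hpP
  rw [Finset.mem_coe] at hpP
  obtain ⟨t, y⟩ := p
  have hyV : y ∈ S12.Vset k (U (g (d j))) H (d j) (d (j + 1)) := by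
    refine S12.Vset_mono ?_ (hM (d j) hdjM (t, y) hpP)
    rw [hdsucc j]
    exact le_max_right _ _
  set ts : Fin k → Cant :=
    fun i => if t i ∈ (↑H ∪ FinC : Set Cant) then t i else S12.trunc (d j) (t i) with hts
  have hcoordmem : ∀ i, t i ∈ ⋃ p ∈ (↑P : Set ((Fin k → Cant) × Cant)), Set.range p.1 := by
    intro i
    exact Set.mem_biUnion (Finset.mem_coe.mpr hpP) ⟨i, rfl⟩
  have hcoords : ∀ i, ts i ∈ (↑H : Set Cant) ∪ S12.FinBelow (d j) := by
    intro i
    by_cases hi : t i ∈ (↑H ∪ FinC : Set Cant)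
    · simp only [hts, if_pos hi]
      rcases hi with hi | hi
      · exact Or.inl hi
      · refine Or.inr ?_
        intro jj hjj
        have hBle : B (t i) ≤ m0 := Finset.le_sup (hcoordfin.mem_toFinset.mpr (hcoordmem i))
        have hlt := hB (t i) hi jj hjj
        omega
    · simp only [hts, if_neg hi]
      exact Or.inr (S12.trunc_mem_finBelow (d j) (t i))
  have hbox : S12.BoxMem k (d (j + 1)) ts t := by
    intro i
    by_cases hi : t i ∈ (↑H ∪ FinC : Set Cant)
    · have hts_i : ts i = t i := by simp only [hts, if_pos hi]
      rw [hts_i]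
      by_cases hfin : (memSet (t i)).Finite
      · exact Or.inl ⟨hfin, S12.Agree.refl _ _⟩
      · exact Or.inr ⟨hfin, rfl⟩
    · simp only [hts, if_neg hi]
      refine Or.inl ⟨(Set.finite_Iio (d j)).subset
        (fun jj hjj => S12.trunc_mem_finBelow (d j) (t i) jj hjj), ?_⟩
      intro jj hjj
      by_cases hlt : jj < d j
      · simp [S12.trunc, hlt]
      · simp only [S12.trunc, if_neg hlt]
        cases htij : t i jj
        · rfl
        · exfalso
          have hmemF : t i ∈ Fs := ⟨hcoordmem i, hi⟩
          have hjjmem : jj ∈ (⋃ x ∈ hFsfin.toFinset, memSet x) ∩ Set.Ico (d j) (d (j + 1)) := by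
            refine ⟨Set.mem_iUnion₂.mpr ⟨t i, hFsfin.mem_toFinset.mpr hmemF, htij⟩,
              not_lt.mp hlt, hjj⟩
          rw [hjOmit'] at hjjmem
          exact hjjmem
  exact hyV ts t y hcoords hbox (S12.Agree.refl _ _)
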